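/- Let $(M_n)_{n\in\mathbb{N}}$ be a discrete-time martingale with $\sup_{i\geq 1}\mathbb{E}[|M_i-M_{i-1}|]<\infty$, and let $(\tau_k)_{k\geq 1}$ be an increasing sequence of random times independent of $M$ with counting process $A_t:=\sum_{k\geq 1}\mathbf{1}_{\{\tau_k\leq t\}}$ satisfying $\mathbb{E}[A_t]<\infty$ for all $t$. Then the process $Z_t := M_0+\sum_{k=1}^{\infty}(M_k-M_{k-1})\mathbf{1}_{\{\tau_k\leq t\}} = M_{A_t}$ is a martingale with respect to its natural filtration. -/

import Mathlib

open MeasureTheory ProbabilityTheory Real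
open scoped NNReal ENNReal

lemma count_aux (p : ℕ → Prop) [DecidablePred p] (hmono : ∀ j k : ℕ, j ≤ k → p k → p j)
    (hfin : (∑' k : ℕ, if p k then (1:ℝ≥0∞) else 0) ≠ ⊤) :
    ∃ N : ℕ, (∀ k, p k ↔ k < N) ∧ (∑' k : ℕ, if p k then (1:ℝ≥0∞) else 0) = N := by
  by_cases hall : ∀ k, p k
  · exfalso; apply hfin
    have : (∑' k : ℕ, if p k then (1:ℝ≥0∞) else 0) = ∑' _ : ℕ, (1:ℝ≥0∞) := by
      congr 1; ext k; simp [hall k]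
    rw [this]
    exact ENNReal.tsum_const_eq_top_of_ne_zero one_ne_zero
  · push_neg at hall
    have hex : ∃ n, ¬ p n := hall
    refine ⟨Nat.find hex, fun k => ⟨fun hk => ?_, fun hk => ?_⟩, ?_⟩
    · by_contra h
      push_neg at h
      exact Nat.find_spec hex (hmono _ _ h hk)
    · exact by_contra fun h => Nat.find_min hex hk h
    · have h1 : (∑' k : ℕ, if p k then (1:ℝ≥0∞) else 0)
          = ∑ k ∈ Finset.range (Nat.find hex), (if p k then (1:ℝ≥0∞) else 0) := by
        apply tsum_eq_sum
        intro k hk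
        simp only [Finset.mem_range, not_lt] at hk
        have : ¬ p k := fun h => (not_lt.2 hk) (by
          by_contra h2
          push_neg at h2
          exact Nat.find_spec hex (hmono _ _ h2 h) )
        simp [this]
      rw [h1]
      rw [Finset.sum_congr rfl (fun k hk => ?_), Finset.sum_const, Finset.card_range,
        nsmul_eq_mul, mul_one]
      have hk' : k < Nat.find hex := Finset.mem_range.1 hk
      have : p k := by
        by_contra h
        exact absurd (Nat.find_min' hex h) (not_le.2 hk')
      simp [this]

lemma sum_aux (f : ℕ → ℝ) (p : ℕ → Prop) [DecidablePred p] (N : ℕ) (hp : ∀ k, p k ↔ k < N) :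
    f N = f 0 + ∑' k : ℕ, (f (k+1) - f k) * (if p k then (1:ℝ) else 0) := by
  have h1 : (∑' k : ℕ, (f (k+1) - f k) * (if p k then (1:ℝ) else 0))
      = ∑ k ∈ Finset.range N, (f (k+1) - f k) * (if p k then (1:ℝ) else 0) := by
    apply tsum_eq_sum
    intro k hk
    have : ¬ p k := fun h => (Finset.mem_range.2 ((hp k).1 h)) |> hk
    simp [this]
  rw [h1, Finset.sum_congr rfl (fun k hk => ?_), Finset.sum_range_sub]
  · ring
  · have : p k := (hp k).2 (Finset.mem_range.1 hk)
    simp [this]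

lemma natural_inter_aux {Ω : Type*} {G : MeasurableSpace Ω} {B : Set Ω} (hB : MeasurableSet[G] B)
    {ι : Type*} [Preorder ι] (s : ι) (f : ι → Ω → ℝ) (g : ι → Ω → ℝ)
    (hg : ∀ u, u ≤ s → Measurable[G] (g u)) (hfg : ∀ u, u ≤ s → ∀ ω ∈ B, f u ω = g u ω)
    {S : Set Ω}
    (hS : MeasurableSet[⨆ u, ⨆ _ : u ≤ s, MeasurableSpace.comap (f u) inferInstance] S) :
    MeasurableSet[G] (S ∩ B) := by
  let D : MeasurableSpace Ω :=
    { MeasurableSet' := fun S => MeasurableSet[G] (S ∩ B)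
      measurableSet_empty := by simp
      measurableSet_compl := fun S hS => by
        have h : Sᶜ ∩ B = B \ (S ∩ B) := by
          ext ω; simp only [Set.mem_inter_iff, Set.mem_compl_iff, Set.mem_diff]; tauto
        show MeasurableSet[G] (Sᶜ ∩ B)
        rw [h]; exact hB.diff hS
      measurableSet_iUnion := fun F hF => by
        show MeasurableSet[G] ((⋃ i, F i) ∩ B)
        rw [Set.iUnion_inter]; exact MeasurableSet.iUnion hF }
  have hle : (⨆ u, ⨆ _ : u ≤ s, MeasurableSpace.comap (f u) inferInstance) ≤ D := by
    refine iSup₂_le fun u hu => ?_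
    rintro _ ⟨Su, hSu, rfl⟩
    show MeasurableSet[G] (f u ⁻¹' Su ∩ B)
    have h : f u ⁻¹' Su ∩ B = g u ⁻¹' Su ∩ B := by
      ext ω
      constructor
      · rintro ⟨h1, h2⟩
        exact ⟨by rw [Set.mem_preimage, ← hfg u hu ω h2]; exact h1, h2⟩
      · rintro ⟨h1, h2⟩
        exact ⟨by rw [Set.mem_preimage, hfg u hu ω h2]; exact h1, h2⟩
    rw [h]
    exact ((hg u hu) hSu).inter hB
  exact hle S hS

lemma key_zero {Ω : Type*} [MeasurableSpace Ω] (μ : Measure Ω) [IsProbabilityMeasure μ]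
    (M : ℕ → Ω → ℝ) (hMsm : ∀ n, StronglyMeasurable (M n))
    (hM : Martingale M (MeasureTheory.Filtration.natural M hMsm) μ)
    (τ : ℕ → Ω → ℝ) (hτmeas : ∀ k, Measurable (τ k))
    (hindep : IndepFun (fun ω => fun k : ℕ => τ k ω) (fun ω => fun n : ℕ => M n ω) μ)
    (k : ℕ) (E : Set Ω)
    (hE : MeasurableSet[MeasurableSpace.comap
        (fun ω => ((fun j : ℕ => τ j ω, fun i : ℕ => M (min i k) ω) :
          (ℕ → ℝ) × (ℕ → ℝ))) inferInstance] E) :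
    ∫ ω in E, (M (k + 1) ω - M k ω) ∂μ = 0 := by
  classical
  set T : Ω → ℕ → ℝ := fun ω => fun j => τ j ω with hTdef
  set V : Ω → ℕ → ℝ := fun ω => fun i => M (min i k) ω with hVdef
  set D : Ω → ℝ := fun ω => M (k + 1) ω - M k ω with hDdef
  set Q : Ω → (ℕ → ℝ) × ℝ := fun ω => (V ω, D ω) with hQdef
  obtain ⟨S, hS, rfl⟩ := hE
  have hT : Measurable T := measurable_pi_lambda _ fun j => hτmeas j
  have hV : Measurable V := measurable_pi_lambda _ fun i => (hMsm _).measurable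
  have hD : Measurable D := (hMsm (k + 1)).measurable.sub (hMsm k).measurable
  have hQ : Measurable Q := hV.prodMk hD
  have hDint : Integrable D μ := (hM.integrable (k + 1)).sub (hM.integrable k)
  -- independence of T and Q
  have hTQ : IndepFun T Q μ := by
    have hψ : Measurable (fun v : ℕ → ℝ =>
        ((fun i => v (min i k), v (k + 1) - v k) : (ℕ → ℝ) × ℝ)) :=
      (measurable_pi_lambda _ fun i => measurable_pi_apply _).prodMk
        ((measurable_pi_apply _).sub (measurable_pi_apply _))
    exact hindep.comp measurable_id hψ
  -- the function F
  set F : (ℕ → ℝ) × ((ℕ → ℝ) × ℝ) → ℝ :=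
    fun q => Set.indicator S (fun _ => (1 : ℝ)) (q.1, q.2.1) * q.2.2 with hFdef
  have hF : Measurable F :=
    ((measurable_const.indicator hS).comp
      (measurable_fst.prodMk (measurable_fst.comp measurable_snd))).mul
      (measurable_snd.comp measurable_snd)
  have hpair : Measurable fun ω => (T ω, Q ω) := hT.prodMk hQ
  have hmap : μ.map (fun ω => (T ω, Q ω)) = (μ.map T).prod (μ.map Q) :=
    (indepFun_iff_map_prod_eq_prod_map_map hT.aemeasurable hQ.aemeasurable).1 hTQ
  have hEmeas : MeasurableSet ((fun ω => (T ω, V ω)) ⁻¹' S) := (hT.prodMk hV) hS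
  -- step 1 : set integral equals integral of F ∘ pair
  have step1 : ∫ ω in (fun ω => (T ω, V ω)) ⁻¹' S, D ω ∂μ = ∫ ω, F (T ω, Q ω) ∂μ := by
    rw [← integral_indicator hEmeas]
    congr 1
    ext ω
    by_cases hω : (T ω, V ω) ∈ S <;>
      simp [hFdef, Set.indicator, hω, Set.mem_preimage, hQdef]
  -- step 2 : transfer to the map measure, then the product measure
  have step2 : ∫ ω, F (T ω, Q ω) ∂μ = ∫ q, F q ∂((μ.map T).prod (μ.map Q)) := by
    rw [← hmap, integral_map hpair.aemeasurable hF.aestronglyMeasurable]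
  -- integrability of F w.r.t. the product measure
  have hFint : Integrable F ((μ.map T).prod (μ.map Q)) := by
    rw [← hmap, integrable_map_measure hF.aestronglyMeasurable hpair.aemeasurable]
    refine hDint.abs.mono' (hF.comp hpair).aestronglyMeasurable ?_
    filter_upwards with ω
    simp only [Function.comp_apply, hFdef]
    by_cases hω : (T ω, V ω) ∈ S <;>
      simp [Set.indicator, hω, abs_nonneg, Real.norm_eq_abs, hQdef]
  -- inner integral vanishes
  have hinner : ∀ x : ℕ → ℝ, ∫ y, F (x, y) ∂(μ.map Q) = 0 := by
    intro x
    have hSx : MeasurableSet {v : ℕ → ℝ | (x, v) ∈ S} := measurable_prodMk_left hS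
    have hFx : Measurable fun y : (ℕ → ℝ) × ℝ => F (x, y) := hF.comp measurable_prodMk_left
    rw [integral_map hQ.aemeasurable hFx.aestronglyMeasurable]
    have heq : (fun ω => F (x, Q ω)) = Set.indicator (V ⁻¹' {v | (x, v) ∈ S}) D := by
      ext ω
      by_cases hω : (x, V ω) ∈ S <;>
        simp [hFdef, Set.indicator, hω, Set.mem_preimage, Set.mem_setOf_eq, hQdef]
    have hpre : MeasurableSet (V ⁻¹' {v : ℕ → ℝ | (x, v) ∈ S}) := hV hSx
    rw [heq, integral_indicator hpre]
    -- martingale property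
    have hVk : Measurable[(MeasureTheory.Filtration.natural M hMsm) k] V := by
      rw [@measurable_pi_iff Ω ℕ _ ((MeasureTheory.Filtration.natural M hMsm) k) _ V]
      intro i
      have h1 : MeasurableSpace.comap (M (min i k)) inferInstance
          ≤ (MeasureTheory.Filtration.natural M hMsm) k :=
        le_iSup₂_of_le (min i k) (min_le_right i k) le_rfl
      exact (Measurable.of_comap_le le_rfl).mono h1 le_rfl
    have hVF : MeasurableSet[(MeasureTheory.Filtration.natural M hMsm) k]
        (V ⁻¹' {v | (x, v) ∈ S}) := hVk hSx
    have hMeq := hM.setIntegral_eq (Nat.le_succ k) hVF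
    rw [hDdef]
    rw [integral_sub ((hM.integrable (k + 1)).integrableOn) ((hM.integrable k).integrableOn)]
    rw [← hMeq, sub_self]
  rw [step1, step2, integral_prod _ hFint]
  simp [hinner]

/-- Autoregressive construction of a step martingale: sampling a discrete-time martingale `M`
(with uniformly bounded increments in `L¹`) at the counting process `A` of an independent
increasing sequence of random times `(τ_k)_{k ≥ 1}` yields a martingale `Z_t = M_{A_t}`
with respect to its natural filtration. -/
theorem step_martingale_autoregressive
    {Ω : Type*} [MeasurableSpace Ω] (μ : Measure Ω) [IsProbabilityMeasure μ]
    (M : ℕ → Ω → ℝ) (hMsm : ∀ n, StronglyMeasurable (M n))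
    (hM : Martingale M (MeasureTheory.Filtration.natural M hMsm) μ)
    (C : ℝ) (hMincr : ∀ i : ℕ, ∫ ω, |M (i + 1) ω - M i ω| ∂μ ≤ C)
    (τ : ℕ → Ω → ℝ) (hτmeas : ∀ k, Measurable (τ k))
    (hτmono : ∀ ω, ∀ j k : ℕ, 1 ≤ j → j ≤ k → τ j ω ≤ τ k ω)
    (hindep : IndepFun (fun ω => fun k : ℕ => τ k ω) (fun ω => fun n : ℕ => M n ω) μ)
    (A : ℝ → Ω → ℝ≥0∞)
    (hAdef : ∀ t ω, A t ω = ∑' k : ℕ, if τ (k + 1) ω ≤ t then (1 : ℝ≥0∞) else 0)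
    (hAint : ∀ t : ℝ, ∫⁻ ω, A t ω ∂μ < ⊤)
    (Z : ℝ → Ω → ℝ) (hZdef : ∀ t ω, Z t ω = M ⌊(A t ω).toReal⌋₊ ω)
    (hZsm : ∀ t, StronglyMeasurable (Z t)) :
    Martingale Z (MeasureTheory.Filtration.natural Z hZsm) μ ∧
    ∀ t : ℝ, ∀ᵐ ω ∂μ,
      Z t ω = M 0 ω
        + ∑' k : ℕ, (M (k + 1) ω - M k ω) * (if τ (k + 1) ω ≤ t then (1 : ℝ) else 0) := by
  -- measurability of A
  have hAmeas : ∀ t, Measurable (A t) := by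
    intro t
    have h : A t = fun ω => ∑' k : ℕ, if τ (k + 1) ω ≤ t then (1 : ℝ≥0∞) else 0 :=
      funext fun ω => hAdef t ω
    rw [h]
    exact Measurable.ennreal_tsum fun k =>
      Measurable.ite (measurableSet_le (hτmeas _) measurable_const)
        measurable_const measurable_const
  -- pointwise structure of A
  have key : ∀ (t : ℝ) ω, A t ω ≠ ⊤ → ∃ N : ℕ,
      (∀ k, τ (k + 1) ω ≤ t ↔ k < N) ∧ A t ω = N ∧ ⌊(A t ω).toReal⌋₊ = N := by
    intro t ω h
    obtain ⟨N, hN1, hN2⟩ := count_aux (fun k => τ (k + 1) ω ≤ t)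
      (fun j k hjk hk =>
        le_trans (hτmono ω (j + 1) (k + 1) (Nat.le_add_left 1 j) (Nat.succ_le_succ hjk)) hk)
      (by rw [← hAdef]; exact h)
    rw [← hAdef] at hN2
    exact ⟨N, hN1, hN2, by rw [hN2]; simp⟩
  have haefin : ∀ t : ℝ, ∀ᵐ ω ∂μ, A t ω ≠ ⊤ := by
    intro t
    filter_upwards [ae_lt_top (hAmeas t) (hAint t).ne] with ω h using h.ne
  -- pointwise representation of Z
  have hrep : ∀ (t : ℝ) ω, A t ω ≠ ⊤ → Z t ω = M 0 ω
      + ∑' k : ℕ, (M (k + 1) ω - M k ω) * (if τ (k + 1) ω ≤ t then (1 : ℝ) else 0) := by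
    intro t ω h
    obtain ⟨N, hN1, _, hN3⟩ := key t ω h
    rw [hZdef, hN3]
    exact sum_aux (fun n => M n ω) _ N hN1
  -- integrability preparations
  have hMint : ∀ n, Integrable (M n) μ := hM.integrable
  have hDint : ∀ k : ℕ, Integrable (fun ω => M (k + 1) ω - M k ω) μ :=
    fun k => (hMint (k + 1)).sub (hMint k)
  have hDmeas : ∀ k : ℕ, Measurable (fun ω => M (k + 1) ω - M k ω) :=
    fun k => (hMsm (k + 1)).measurable.sub (hMsm k).measurable
  have hDlint : ∀ k : ℕ, ∫⁻ ω, (‖M (k + 1) ω - M k ω‖₊ : ℝ≥0∞) ∂μ ≤ ENNReal.ofReal C := by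
    intro k
    rw [show (∫⁻ ω, (‖M (k + 1) ω - M k ω‖₊ : ℝ≥0∞) ∂μ) = ENNReal.ofReal (∫ ω, ‖M (k + 1) ω - M k ω‖ ∂μ) from
      (ofReal_integral_norm_eq_lintegral_enorm (hDint k)).symm]
    apply ENNReal.ofReal_le_ofReal
    calc ∫ ω, ‖M (k + 1) ω - M k ω‖ ∂μ = ∫ ω, |M (k + 1) ω - M k ω| ∂μ := by
          simp [Real.norm_eq_abs]
      _ ≤ C := hMincr k
  -- ennreal dominating functions
  set gE : ℕ → ℝ → Ω → ℝ≥0∞ := fun k t ω =>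
    (‖M (k + 1) ω - M k ω‖₊ : ℝ≥0∞) * (if τ (k + 1) ω ≤ t then 1 else 0) with hgEdef
  have hgmeas : ∀ (k : ℕ) (t : ℝ), Measurable (gE k t) := by
    intro k t
    exact ((hDmeas k).nnnorm.coe_nnreal_ennreal).mul
      (Measurable.ite (measurableSet_le (hτmeas _) measurable_const)
        measurable_const measurable_const)
  -- the key finiteness bound
  have hsumfin : ∀ t : ℝ, ∑' k : ℕ, ∫⁻ ω, gE k t ω ∂μ ≠ ⊤ := by
    intro t
    have hind : ∀ k : ℕ, ∫⁻ ω, gE k t ω ∂μ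
        = (∫⁻ ω, (‖M (k + 1) ω - M k ω‖₊ : ℝ≥0∞) ∂μ)
          * ∫⁻ ω, (if τ (k + 1) ω ≤ t then (1 : ℝ≥0∞) else 0) ∂μ := by
      intro k
      have hφ : Measurable fun v : ℕ → ℝ => (‖v (k + 1) - v k‖₊ : ℝ≥0∞) :=
        (((measurable_pi_apply (k + 1)).sub (measurable_pi_apply k)).nnnorm).coe_nnreal_ennreal
      have hψ : Measurable fun x : ℕ → ℝ => (if x (k + 1) ≤ t then (1 : ℝ≥0∞) else 0) :=
        Measurable.ite (measurableSet_le (measurable_pi_apply _) measurable_const)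
          measurable_const measurable_const
      have hI : IndepFun (fun ω => (‖M (k + 1) ω - M k ω‖₊ : ℝ≥0∞))
          (fun ω => (if τ (k + 1) ω ≤ t then (1 : ℝ≥0∞) else 0)) μ :=
        hindep.symm.comp hφ hψ
      have := lintegral_mul_eq_lintegral_mul_lintegral_of_indepFun
        ((hDmeas k).nnnorm.coe_nnreal_ennreal)
        (Measurable.ite (measurableSet_le (hτmeas _) measurable_const)
          measurable_const measurable_const) hI
      simpa [hgEdef, Pi.mul_apply] using this
    have hAsum : ∑' k : ℕ, ∫⁻ ω, (if τ (k + 1) ω ≤ t then (1 : ℝ≥0∞) else 0) ∂μ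
        = ∫⁻ ω, A t ω ∂μ := by
      rw [show A t = fun ω => ∑' k : ℕ, if τ (k + 1) ω ≤ t then (1 : ℝ≥0∞) else 0 from
        funext fun ω => hAdef t ω]
      rw [lintegral_tsum fun k =>
        (Measurable.ite (measurableSet_le (hτmeas _) measurable_const)
          measurable_const measurable_const).aemeasurable]
    have hb : ∑' k : ℕ, ∫⁻ ω, gE k t ω ∂μ
        ≤ ENNReal.ofReal C * ∫⁻ ω, A t ω ∂μ := by
      rw [← hAsum, ← ENNReal.tsum_mul_left]
      refine ENNReal.tsum_le_tsum fun k => ?_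
      rw [hind k]
      exact mul_le_mul_left (hDlint k) _
    exact fun h => absurd (h ▸ hb)
      (not_le.2 (ENNReal.mul_lt_top ENNReal.ofReal_lt_top (hAint t)))
  -- pointwise bound on Z
  have hZbound : ∀ (t : ℝ) ω, A t ω ≠ ⊤ →
      (‖Z t ω‖₊ : ℝ≥0∞) ≤ (‖M 0 ω‖₊ : ℝ≥0∞) + ∑' k : ℕ, gE k t ω := by
    intro t ω h
    obtain ⟨N, hN1, _, hN3⟩ := key t ω h
    rw [hZdef, hN3]
    have htele : M N ω = M 0 ω + ∑ k ∈ Finset.range N, (M (k + 1) ω - M k ω) := by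
      rw [Finset.sum_range_sub (fun n => M n ω) N]; ring
    rw [htele]
    calc (‖M 0 ω + ∑ k ∈ Finset.range N, (M (k + 1) ω - M k ω)‖₊ : ℝ≥0∞)
        ≤ (‖M 0 ω‖₊ : ℝ≥0∞) + (‖∑ k ∈ Finset.range N, (M (k + 1) ω - M k ω)‖₊ : ℝ≥0∞) := by
          exact_mod_cast nnnorm_add_le _ _
      _ ≤ (‖M 0 ω‖₊ : ℝ≥0∞) + ∑ k ∈ Finset.range N, (‖M (k + 1) ω - M k ω‖₊ : ℝ≥0∞) := by
          gcongr
          exact_mod_cast nnnorm_sum_le _ _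
      _ ≤ (‖M 0 ω‖₊ : ℝ≥0∞) + ∑' k : ℕ, gE k t ω := by
          gcongr
          have heq : ∑ k ∈ Finset.range N, (‖M (k + 1) ω - M k ω‖₊ : ℝ≥0∞)
              = ∑ k ∈ Finset.range N, gE k t ω := by
            refine Finset.sum_congr rfl fun k hk => ?_
            have : τ (k + 1) ω ≤ t := (hN1 k).2 (Finset.mem_range.1 hk)
            simp [hgEdef, this]
          rw [heq]
          exact ENNReal.sum_le_tsum _
  -- integrability of Z
  have hZint : ∀ t : ℝ, Integrable (Z t) μ := by
    intro t
    refine ⟨(hZsm t).aestronglyMeasurable, ?_⟩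
    show (∫⁻ ω, (‖Z t ω‖₊ : ℝ≥0∞) ∂μ) < ⊤
    calc (∫⁻ ω, (‖Z t ω‖₊ : ℝ≥0∞) ∂μ)
        ≤ ∫⁻ ω, ((‖M 0 ω‖₊ : ℝ≥0∞) + ∑' k : ℕ, gE k t ω) ∂μ := by
          refine lintegral_mono_ae ?_
          filter_upwards [haefin t] with ω h using hZbound t ω h
      _ = (∫⁻ ω, (‖M 0 ω‖₊ : ℝ≥0∞) ∂μ) + ∫⁻ ω, ∑' k : ℕ, gE k t ω ∂μ :=
          lintegral_add_left ((hMsm 0).measurable.nnnorm.coe_nnreal_ennreal) _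
      _ = (∫⁻ ω, (‖M 0 ω‖₊ : ℝ≥0∞) ∂μ) + ∑' k : ℕ, ∫⁻ ω, gE k t ω ∂μ := by
          rw [lintegral_tsum fun k => (hgmeas k t).aemeasurable]
      _ < ⊤ := ENNReal.add_lt_top.2 ⟨(hMint 0).2, lt_top_iff_ne_top.2 (hsumfin t)⟩
  -- part 2
  have part2 : ∀ t : ℝ, ∀ᵐ ω ∂μ, Z t ω = M 0 ω
      + ∑' k : ℕ, (M (k + 1) ω - M k ω) * (if τ (k + 1) ω ≤ t then (1 : ℝ) else 0) := by
    intro t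
    filter_upwards [haefin t] with ω h using hrep t ω h
  refine ⟨⟨MeasureTheory.Filtration.stronglyAdapted_natural hZsm, fun s t hst => ?_⟩, part2⟩
  -- the conditional expectation property
  refine (ae_eq_condExp_of_forall_setIntegral_eq ((Filtration.natural Z hZsm).le s) (hZint t)
    (fun E _ _ => (hZint s).integrableOn) (fun E hE _ => ?_)
    ((MeasureTheory.Filtration.stronglyAdapted_natural hZsm s).aestronglyMeasurable)).symm
  -- goal : ∫ ω in E, Z s ω ∂μ = ∫ ω in E, Z t ω ∂μ
  have hEamb : MeasurableSet E := (Filtration.natural Z hZsm).le s E hE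
  set J : ℕ → Ω → ℝ := fun k ω =>
    (if τ (k + 1) ω ≤ t then (1 : ℝ) else 0) - (if τ (k + 1) ω ≤ s then (1 : ℝ) else 0)
    with hJdef
  set B : ℕ → Set Ω := fun k => {ω | ¬ τ (k + 1) ω ≤ s} ∩ {ω | τ (k + 1) ω ≤ t} with hBdef
  have hJB : ∀ (k : ℕ) ω, (M (k + 1) ω - M k ω) * J k ω
      = Set.indicator (B k) (fun ω => M (k + 1) ω - M k ω) ω := by
    intro k ω
    by_cases h1 : τ (k + 1) ω ≤ s
    · have h2 : τ (k + 1) ω ≤ t := h1.trans hst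
      have hnB : ω ∉ B k := fun hc => hc.1 h1
      simp [hJdef, Set.indicator_of_notMem hnB, h1, h2]
    · by_cases h2 : τ (k + 1) ω ≤ t
      · have hB : ω ∈ B k := ⟨h1, h2⟩
        simp [hJdef, Set.indicator_of_mem hB, h1, h2]
      · have hnB : ω ∉ B k := fun hc => h2 hc.2
        simp [hJdef, Set.indicator_of_notMem hnB, h1, h2]
  have hJmeas : ∀ k : ℕ, Measurable (J k) :=
    fun k => (Measurable.ite (measurableSet_le (hτmeas _) measurable_const)
      measurable_const measurable_const).sub
      (Measurable.ite (measurableSet_le (hτmeas _) measurable_const)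
        measurable_const measurable_const)
  -- the difference representation
  have hdiff : ∀ᵐ ω ∂μ, Z t ω - Z s ω = ∑' k : ℕ, (M (k + 1) ω - M k ω) * J k ω := by
    filter_upwards [haefin t, haefin s] with ω hft hfs
    obtain ⟨Nt, hNt1, _, _⟩ := key t ω hft
    obtain ⟨Ns, hNs1, _, _⟩ := key s ω hfs
    rw [hrep t ω hft, hrep s ω hfs]
    have h1 : (∑' k : ℕ, (M (k + 1) ω - M k ω) * (if τ (k + 1) ω ≤ t then (1 : ℝ) else 0))
        = ∑ k ∈ Finset.range Nt,
            (M (k + 1) ω - M k ω) * (if τ (k + 1) ω ≤ t then (1 : ℝ) else 0) := by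
      refine tsum_eq_sum fun k hk => ?_
      have : ¬ τ (k + 1) ω ≤ t := fun h => hk (Finset.mem_range.2 ((hNt1 k).1 h))
      simp [this]
    have h2 : (∑' k : ℕ, (M (k + 1) ω - M k ω) * (if τ (k + 1) ω ≤ s then (1 : ℝ) else 0))
        = ∑ k ∈ Finset.range Nt,
            (M (k + 1) ω - M k ω) * (if τ (k + 1) ω ≤ s then (1 : ℝ) else 0) := by
      refine tsum_eq_sum fun k hk => ?_
      have : ¬ τ (k + 1) ω ≤ s := fun h =>
        hk (Finset.mem_range.2 ((hNt1 k).1 (h.trans hst)))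
      simp [this]
    have h3 : (∑' k : ℕ, (M (k + 1) ω - M k ω) * J k ω)
        = ∑ k ∈ Finset.range Nt, (M (k + 1) ω - M k ω) * J k ω := by
      refine tsum_eq_sum fun k hk => ?_
      have ht' : ¬ τ (k + 1) ω ≤ t := fun h => hk (Finset.mem_range.2 ((hNt1 k).1 h))
      have hs' : ¬ τ (k + 1) ω ≤ s := fun h => ht' (h.trans hst)
      simp [hJdef, ht', hs']
    rw [h1, h2, h3]
    have hterm : ∀ k, (M (k + 1) ω - M k ω) * J k ω
        = (M (k + 1) ω - M k ω) * (if τ (k + 1) ω ≤ t then (1 : ℝ) else 0)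
          - (M (k + 1) ω - M k ω) * (if τ (k + 1) ω ≤ s then (1 : ℝ) else 0) := by
      intro k; simp only [hJdef]; ring
    rw [Finset.sum_congr rfl fun k _ => hterm k, Finset.sum_sub_distrib]
    ring
  -- each term has zero integral over E
  have hterm0 : ∀ k : ℕ, ∫ ω in E, (M (k + 1) ω - M k ω) * J k ω ∂μ = 0 := by
    intro k
    have hBmeas : MeasurableSet (B k) :=
      ((measurableSet_le (hτmeas _) measurable_const).compl).inter
        (measurableSet_le (hτmeas _) measurable_const)
    have hre : (fun ω => (M (k + 1) ω - M k ω) * J k ω)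
        = Set.indicator (B k) (fun ω => M (k + 1) ω - M k ω) := funext (hJB k)
    rw [integral_congr_ae (Filter.EventuallyEq.restrict (Filter.EventuallyEq.of_eq hre)),
      setIntegral_indicator hBmeas]
    -- the σ-algebra G
    set P : Ω → (ℕ → ℝ) × (ℕ → ℝ) :=
      fun ω => (fun j : ℕ => τ j ω, fun i : ℕ => M (min i k) ω) with hPdef
    have hPG : Measurable[MeasurableSpace.comap P inferInstance] P :=
      Measurable.of_comap_le le_rfl
    have hτG : ∀ j : ℕ, Measurable[MeasurableSpace.comap P inferInstance] (fun ω => τ j ω) :=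
      fun j => ((measurable_pi_apply j).comp measurable_fst).comp hPG
    have hEB' : MeasurableSet[MeasurableSpace.comap P inferInstance]
        (E ∩ {ω | ¬ τ (k + 1) ω ≤ s}) := by
      refine natural_inter_aux
        ((measurableSet_le (hτG (k + 1)) measurable_const).compl) s Z
        (fun u ω => M (min ⌊(A u ω).toReal⌋₊ k) ω) ?_ ?_ ?_
      · -- measurability of the G-version
        intro u _
        have hAG : Measurable[MeasurableSpace.comap P inferInstance] (A u) := by
          rw [show A u = fun ω => ∑' j : ℕ, if τ (j + 1) ω ≤ u then (1 : ℝ≥0∞) else 0 from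
            funext fun ω => hAdef u ω]
          exact Measurable.ennreal_tsum fun j =>
            Measurable.ite (measurableSet_le (hτG _) measurable_const)
              measurable_const measurable_const
        have hnG : Measurable[MeasurableSpace.comap P inferInstance]
            (fun ω => ⌊(A u ω).toReal⌋₊) :=
          Nat.measurable_floor.comp (ENNReal.measurable_toReal.comp hAG)
        have hVG : Measurable[MeasurableSpace.comap P inferInstance] (fun ω => (P ω).2) :=
          measurable_snd.comp hPG
        have heval : Measurable fun p : (ℕ → ℝ) × ℕ => p.1 p.2 :=
          measurable_from_prod_countable_left fun i => measurable_pi_apply i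
        exact heval.comp (hVG.prodMk hnG)
      · -- equality on the good event
        intro u hu ω hω
        have hτku : ¬ τ (k + 1) ω ≤ u := fun h => hω (h.trans hu)
        have hfin : A u ω ≠ ⊤ := by
          rw [hAdef]
          have h1 : (∑' j : ℕ, if τ (j + 1) ω ≤ u then (1 : ℝ≥0∞) else 0)
              = ∑ j ∈ Finset.range k, (if τ (j + 1) ω ≤ u then (1 : ℝ≥0∞) else 0) := by
            refine tsum_eq_sum fun j hj => ?_
            have hjk : k ≤ j := not_lt.1 fun h => hj (Finset.mem_range.2 h)
            have : ¬ τ (j + 1) ω ≤ u := fun h =>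
              hτku (le_trans (hτmono ω (k + 1) (j + 1)
                (Nat.le_add_left 1 k) (Nat.succ_le_succ hjk)) h)
            simp [this]
          rw [h1]
          exact (ENNReal.sum_lt_top.2 fun j _ => by split <;> simp).ne
        obtain ⟨N, hN1, _, hN3⟩ := key u ω hfin
        have hNk : N ≤ k := by
          by_contra h
          exact hτku ((hN1 k).2 (not_le.1 h))
        rw [hZdef, hN3]
        congr 1
        omega
      · exact hE
    have hEBk : MeasurableSet[MeasurableSpace.comap P inferInstance] (E ∩ B k) := by
      have h : E ∩ B k = (E ∩ {ω | ¬ τ (k + 1) ω ≤ s}) ∩ {ω | τ (k + 1) ω ≤ t} := by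
        rw [hBdef]; ext ω
        simp only [Set.mem_inter_iff, Set.mem_setOf_eq]; tauto
      rw [h]
      exact hEB'.inter (measurableSet_le (hτG (k + 1)) measurable_const)
    -- conclude with the key lemma
    refine key_zero μ M hMsm hM τ hτmeas hindep k (E ∩ B k) ?_
    exact hEBk
  -- sum up
  have hfin' : ∑' k : ℕ, ∫⁻ ω, ‖(M (k + 1) ω - M k ω) * J k ω‖₊ ∂(μ.restrict E) ≠ ⊤ := by
    refine ne_top_of_le_ne_top (hsumfin t) (ENNReal.tsum_le_tsum fun k => ?_)
    calc ∫⁻ ω, ‖(M (k + 1) ω - M k ω) * J k ω‖₊ ∂(μ.restrict E)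
        ≤ ∫⁻ ω, gE k t ω ∂(μ.restrict E) := by
          refine lintegral_mono fun ω => ?_
          by_cases h2 : τ (k + 1) ω ≤ t
          · by_cases h1 : τ (k + 1) ω ≤ s <;>
              simp [hgEdef, hJdef, h1, h2, nnnorm_mul]
          · have h1 : ¬ τ (k + 1) ω ≤ s := fun h => h2 (h.trans hst)
            simp [hgEdef, hJdef, h1, h2, nnnorm_mul]
      _ ≤ ∫⁻ ω, gE k t ω ∂μ := lintegral_mono' Measure.restrict_le_self le_rfl
  have hsub : ∫ ω in E, (Z t ω - Z s ω) ∂μ = 0 := by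
    have hcong : ∫ ω in E, (Z t ω - Z s ω) ∂μ
        = ∫ ω in E, (∑' k : ℕ, (M (k + 1) ω - M k ω) * J k ω) ∂μ :=
      integral_congr_ae (ae_restrict_of_ae hdiff)
    rw [hcong,
      integral_tsum (f := fun k ω => (M (k + 1) ω - M k ω) * J k ω) (fun k => ((hDmeas k).mul (hJmeas k)).aestronglyMeasurable) hfin']
    simp only [hterm0, tsum_zero]
  rw [integral_sub ((hZint t).integrableOn) ((hZint s).integrableOn)] at hsub
  linarith
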